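/- Let d₁,r₁,d₂,r₂ be positive integers and let Γ̃ : S(d₁,r₁) → M_{d₂}(M_{r₂}(ℂ)) be a linear map which is completely positive (for every n ≥ 1, whenever an n×n block matrix with all blocks in S(d₁,r₁) is positive semidefinite, its blockwise image under Γ̃ is positive semidefinite) and CPTP-preserving (whenever C ∈ S(d₁,r₁) is positive semidefinite with Tr_{r₁}(C) = I_{d₁}, then Γ̃(C) is positive semidefinite with Tr_{r₂}(Γ̃(C)) = I_{d₂}). Then there exists a completely positive linear map S̃ : M_{d₁}(M_{r₁}(ℂ)) → M_{d₂}(M_{r₂}(ℂ)) extending Γ̃ (i.e., S̃(C) = Γ̃(C) for all C ∈ S(d₁,r₁)) which is moreover TP-preserving: for every C ∈ M_{d₁}(M_{r₁}(ℂ)) (not necessarily positive semidefinite) with Tr_{r₁}(C) = I_{d₁}, one has Tr_{r₂}(S̃(C)) = I_{d₂}. In other words, every QSC extends to a quantum superchannel. -/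

import Mathlib

open scoped Kronecker ComplexOrder Matrix

noncomputable section

/-- Apply a map `φ` between matrix algebras blockwise to a block matrix. -/
def mapBlocks {m A B : Type*} (φ : Matrix A A ℂ → Matrix B B ℂ)
    (M : Matrix (m × A) (m × A) ℂ) : Matrix (m × B) (m × B) ℂ :=
  Matrix.of fun p q => φ (Matrix.of fun a b => M (p.1, a) (q.1, b)) p.2 q.2

/-- Complete positivity: every blockwise application preserves positive semidefiniteness. -/
def IsCP {A B : Type*} [Fintype A] [Fintype B] (φ : Matrix A A ℂ → Matrix B B ℂ) : Prop :=
  ∀ (n : ℕ) (M : Matrix (Fin n × A) (Fin n × A) ℂ), M.PosSemidef → (mapBlocks φ M).PosSemidef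

/-- CPTP: completely positive and trace preserving. -/
def IsCPTP {A B : Type*} [Fintype A] [Fintype B] (φ : Matrix A A ℂ →ₗ[ℂ] Matrix B B ℂ) : Prop :=
  IsCP ⇑φ ∧ ∀ X, (φ X).trace = X.trace

/-- The Choi matrix of a linear map, `C_φ = Σ_{ij} E_{ij} ⊗ φ(E_{ij})`. -/
def choi {d r : ℕ} (φ : Matrix (Fin d) (Fin d) ℂ →ₗ[ℂ] Matrix (Fin r) (Fin r) ℂ) :
    Matrix (Fin d × Fin r) (Fin d × Fin r) ℂ :=
  Matrix.of fun p q => φ (Matrix.single p.1 q.1 1) p.2 q.2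

/-- The trace of the `(i,j)` block of a block matrix. -/
def btr {d r : ℕ} (C : Matrix (Fin d × Fin r) (Fin d × Fin r) ℂ) (i j : Fin d) : ℂ :=
  ∑ k : Fin r, C (i, k) (j, k)

lemma btr_add {d r : ℕ} (C D : Matrix (Fin d × Fin r) (Fin d × Fin r) ℂ) (i j : Fin d) :
    btr (C + D) i j = btr C i j + btr D i j := by
  simp [btr, Finset.sum_add_distrib]

lemma btr_smul {d r : ℕ} (c : ℂ) (C : Matrix (Fin d × Fin r) (Fin d × Fin r) ℂ) (i j : Fin d) :
    btr (c • C) i j = c * btr C i j := by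
  simp [btr, Finset.mul_sum]

/-- The operator system `S(d,r)`: block matrices whose diagonal blocks all have
the same trace and whose off-diagonal blocks have trace zero. -/
def Sset (d r : ℕ) : Set (Matrix (Fin d × Fin r) (Fin d × Fin r) ℂ) :=
  {C | (∀ i j : Fin d, btr C i i = btr C j j) ∧ ∀ i j : Fin d, i ≠ j → btr C i j = 0}

/-- `S(d,r)` as a subspace. -/
def Ssub (d r : ℕ) : Submodule ℂ (Matrix (Fin d × Fin r) (Fin d × Fin r) ℂ) where
  carrier := Sset d r
  add_mem' := by
    rintro C D ⟨hC1, hC2⟩ ⟨hD1, hD2⟩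
    refine ⟨fun i j => ?_, fun i j hij => ?_⟩
    · rw [btr_add, btr_add, hC1 i j, hD1 i j]
    · rw [btr_add, hC2 i j hij, hD2 i j hij, add_zero]
  zero_mem' := by
    refine ⟨fun i j => ?_, fun i j _ => ?_⟩ <;> simp [btr]
  smul_mem' := by
    rintro c C ⟨hC1, hC2⟩
    refine ⟨fun i j => ?_, fun i j hij => ?_⟩
    · rw [btr_smul, btr_smul, hC1 i j]
    · rw [btr_smul, hC2 i j hij, mul_zero]

/-- The partial trace over the second factor. -/
def ptrace {d r : ℕ} (C : Matrix (Fin d × Fin r) (Fin d × Fin r) ℂ) : Matrix (Fin d) (Fin d) ℂ :=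
  Matrix.of fun i j => btr C i j

/-! ### Auxiliary development -/

open Matrix Complex

section AuxBasic

lemma exists_smul_one_add_posSemidef {m : Type*} [Fintype m] [DecidableEq m]
    {H : Matrix m m ℂ} (hH : H.IsHermitian) :
    ∃ t : ℝ, 0 < t ∧ (((t : ℂ) • (1 : Matrix m m ℂ)) + H).PosSemidef := by
  classical
  set t : ℝ := 1 + ∑ i, |hH.eigenvalues i| with ht
  have htpos : 0 < t := by positivity
  refine ⟨t, htpos, ?_⟩
  set U : Matrix m m ℂ := (hH.eigenvectorUnitary : Matrix m m ℂ) with hUdef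
  have hU : U * star U = 1 := Matrix.mem_unitaryGroup_iff.mp (hH.eigenvectorUnitary).2
  have hdiag : (Matrix.diagonal fun i => ((t + hH.eigenvalues i : ℝ) : ℂ)).PosSemidef := by
    apply Matrix.PosSemidef.diagonal
    intro i
    have h1 : |hH.eigenvalues i| ≤ ∑ j, |hH.eigenvalues j| :=
      Finset.single_le_sum (f := fun j => |hH.eigenvalues j|)
        (fun j _ => abs_nonneg _) (Finset.mem_univ i)
    have h2 := neg_abs_le (hH.eigenvalues i)
    have : (0:ℝ) ≤ t + hH.eigenvalues i := by rw [ht]; linarith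
    exact Complex.zero_le_real.mpr this
  have key : ((t : ℂ) • (1 : Matrix m m ℂ)) + H
      = U * (Matrix.diagonal fun i => ((t + hH.eigenvalues i : ℝ) : ℂ)) * star U := by
    have hd : (Matrix.diagonal fun i => ((t + hH.eigenvalues i : ℝ) : ℂ))
        = (t : ℂ) • (1 : Matrix m m ℂ) + Matrix.diagonal (RCLike.ofReal ∘ hH.eigenvalues) := by
      ext i j
      by_cases h : i = j <;>
        simp [Matrix.diagonal_apply, Matrix.one_apply, h, Complex.ofReal_add]
    rw [hd, Matrix.mul_add, Matrix.add_mul]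
    conv_lhs => rw [hH.spectral_theorem]; simp only [Unitary.conjStarAlgAut_apply, Unitary.coe_star]
    congr 1
    rw [Matrix.mul_smul, Matrix.smul_mul, Matrix.mul_one, hU]
  rw [key, Matrix.star_eq_conjTranspose]
  exact hdiag.mul_mul_conjTranspose_same U

lemma psd_rsmul {m : Type*} [Fintype m] {A : Matrix m m ℂ} (hA : A.PosSemidef)
    {c : ℝ} (hc : 0 ≤ c) : ((c : ℂ) • A).PosSemidef := by
  refine Matrix.posSemidef_iff_dotProduct_mulVec.mpr ⟨?_, fun x => ?_⟩
  · rw [Matrix.IsHermitian, Matrix.conjTranspose_smul, hA.1.eq, Complex.star_def,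
      Complex.conj_ofReal]
  · have : (star x) ⬝ᵥ ((c : ℂ) • A) *ᵥ x = (c : ℂ) * ((star x) ⬝ᵥ A *ᵥ x) := by
      rw [Matrix.smul_mulVec, dotProduct_smul, smul_eq_mul]
    rw [this]
    exact mul_nonneg (Complex.zero_le_real.mpr hc) ((Matrix.posSemidef_iff_dotProduct_mulVec.mp hA).2 x)

lemma btr_conjTranspose {d r : ℕ} (C : Matrix (Fin d × Fin r) (Fin d × Fin r) ℂ) (i j : Fin d) :
    btr Cᴴ i j = starRingEnd ℂ (btr C j i) := by
  simp [btr, Matrix.conjTranspose_apply, map_sum]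

lemma Ssub_star {d r : ℕ} {C : Matrix (Fin d × Fin r) (Fin d × Fin r) ℂ}
    (h : C ∈ Ssub d r) : Cᴴ ∈ Ssub d r := by
  obtain ⟨h1, h2⟩ := h
  refine ⟨fun i j => ?_, fun i j hij => ?_⟩
  · rw [btr_conjTranspose, btr_conjTranspose, h1 i j]
  · rw [btr_conjTranspose, h2 j i (Ne.symm hij), map_zero]

lemma btr_one {d r : ℕ} (i j : Fin d) :
    btr (1 : Matrix (Fin d × Fin r) (Fin d × Fin r) ℂ) i j = if i = j then (r : ℂ) else 0 := by
  by_cases h : i = j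
  · subst h; simp [btr, Matrix.one_apply]
  · simp [btr, Matrix.one_apply, Prod.ext_iff, h]

lemma Ssub_one {d r : ℕ} : (1 : Matrix (Fin d × Fin r) (Fin d × Fin r) ℂ) ∈ Ssub d r := by
  refine ⟨fun i j => ?_, fun i j hij => ?_⟩
  · simp [btr_one]
  · simp [btr_one, hij]

/-- The `(k,l)` block of a block matrix. -/
def blockOf {m A : Type*} (Z : Matrix (m × A) (m × A) ℂ) (k l : m) : Matrix A A ℂ :=
  Matrix.of fun a b => Z (k, a) (l, b)

lemma blockOf_add {m A : Type*} (Z W : Matrix (m × A) (m × A) ℂ) (k l : m) :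
    blockOf (Z + W) k l = blockOf Z k l + blockOf W k l := by
  ext a b; simp [blockOf]

lemma blockOf_sub {m A : Type*} (Z W : Matrix (m × A) (m × A) ℂ) (k l : m) :
    blockOf (Z - W) k l = blockOf Z k l - blockOf W k l := by
  ext a b; simp [blockOf]

lemma blockOf_smul {m A : Type*} (c : ℂ) (Z : Matrix (m × A) (m × A) ℂ) (k l : m) :
    blockOf (c • Z) k l = c • blockOf Z k l := by
  ext a b; simp [blockOf]

lemma blockOf_rsmul {m A : Type*} (c : ℝ) (Z : Matrix (m × A) (m × A) ℂ) (k l : m) :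
    blockOf (c • Z) k l = (c : ℂ) • blockOf Z k l := by
  ext a b; simp [blockOf, Complex.real_smul]

lemma blockOf_zero {m A : Type*} (k l : m) :
    blockOf (0 : Matrix (m × A) (m × A) ℂ) k l = 0 := by
  ext a b; simp [blockOf]

lemma blockOf_conjTranspose {m A : Type*} (Z : Matrix (m × A) (m × A) ℂ) (k l : m) :
    blockOf Zᴴ k l = (blockOf Z l k)ᴴ := by
  ext a b; simp [blockOf, Matrix.conjTranspose_apply]

lemma blockOf_one {m A : Type*} [DecidableEq m] [DecidableEq A] (k l : m) :
    blockOf (1 : Matrix (m × A) (m × A) ℂ) k l = if k = l then 1 else 0 := by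
  ext a b
  by_cases h : k = l <;> simp [blockOf, Matrix.one_apply, Prod.ext_iff, h]

lemma ptrace_add {d r : ℕ} (C D : Matrix (Fin d × Fin r) (Fin d × Fin r) ℂ) :
    ptrace (C + D) = ptrace C + ptrace D := by
  ext i j; simp [ptrace, btr_add]

lemma ptrace_sub {d r : ℕ} (C D : Matrix (Fin d × Fin r) (Fin d × Fin r) ℂ) :
    ptrace (C - D) = ptrace C - ptrace D := by
  ext i j; simp [ptrace, btr, Finset.sum_sub_distrib]

lemma ptrace_smul {d r : ℕ} (c : ℂ) (C : Matrix (Fin d × Fin r) (Fin d × Fin r) ℂ) :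
    ptrace (c • C) = c • ptrace C := by
  ext i j; simp [ptrace, btr_smul]

lemma ptrace_conjTranspose_eq_zero {d r : ℕ}
    {C : Matrix (Fin d × Fin r) (Fin d × Fin r) ℂ} (h : ptrace C = 0) : ptrace Cᴴ = 0 := by
  ext i j
  have : btr C j i = 0 := by
    have := congrFun (congrFun h j) i
    simpa [ptrace] using this
  simp [ptrace, btr_conjTranspose, this]

end AuxBasic

section GammaExt

variable {d₁ r₁ d₂ r₂ : ℕ}

/-- The complete-positivity hypothesis, as in the main theorem. -/
abbrev HypCP (Γ : ↥(Ssub d₁ r₁) →ₗ[ℂ] Matrix (Fin d₂ × Fin r₂) (Fin d₂ × Fin r₂) ℂ) : Prop :=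
  ∀ (n : ℕ) (M : Matrix (Fin n × (Fin d₁ × Fin r₁)) (Fin n × (Fin d₁ × Fin r₁)) ℂ)
      (hM : ∀ k l : Fin n,
        (Matrix.of fun a b : Fin d₁ × Fin r₁ => M (k, a) (l, b)) ∈ Ssub d₁ r₁),
    M.PosSemidef →
    (Matrix.of fun p q : Fin n × (Fin d₂ × Fin r₂) =>
      Γ ⟨Matrix.of fun a b : Fin d₁ × Fin r₁ => M (p.1, a) (q.1, b),
        hM p.1 q.1⟩ p.2 q.2).PosSemidef

variable (Γ : ↥(Ssub d₁ r₁) →ₗ[ℂ] Matrix (Fin d₂ × Fin r₂) (Fin d₂ × Fin r₂) ℂ)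

/-- An arbitrary linear extension of `Γ` to the whole matrix space. -/
def Gext : Matrix (Fin d₁ × Fin r₁) (Fin d₁ × Fin r₁) ℂ →ₗ[ℂ]
    Matrix (Fin d₂ × Fin r₂) (Fin d₂ × Fin r₂) ℂ :=
  Γ ∘ₗ Submodule.linearProjOfIsCompl (Ssub d₁ r₁) ((Ssub d₁ r₁).exists_isCompl).choose
      ((Ssub d₁ r₁).exists_isCompl).choose_spec

lemma Gext_apply {C : Matrix (Fin d₁ × Fin r₁) (Fin d₁ × Fin r₁) ℂ} (hC : C ∈ Ssub d₁ r₁) :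
    Gext Γ C = Γ ⟨C, hC⟩ := by
  have h := Submodule.linearProjOfIsCompl_apply_left
    ((Ssub d₁ r₁).exists_isCompl).choose_spec (⟨C, hC⟩ : Ssub d₁ r₁)
  simp only [Gext, LinearMap.comp_apply]
  exact congrArg Γ h

lemma Gamma_star (hCP : HypCP Γ) {C : Matrix (Fin d₁ × Fin r₁) (Fin d₁ × Fin r₁) ℂ}
    (hC : C ∈ Ssub d₁ r₁) :
    Γ ⟨Cᴴ, Ssub_star hC⟩ = (Γ ⟨C, hC⟩)ᴴ := by
  classical
  set K : Matrix (Fin 2 × (Fin d₁ × Fin r₁)) (Fin 2 × (Fin d₁ × Fin r₁)) ℂ :=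
    Matrix.of fun p q =>
      if p.1 = q.1 then 0 else if p.1 = 0 then C p.2 q.2 else Cᴴ p.2 q.2 with hK
  have hKherm : K.IsHermitian := by
    ext ⟨k, a⟩ ⟨l, b⟩
    show star (K (l, b) (k, a)) = K (k, a) (l, b)
    fin_cases k <;> fin_cases l <;>
      simp [hK, Matrix.conjTranspose_apply]
  obtain ⟨t, ht, hpsd⟩ := exists_smul_one_add_posSemidef hKherm
  set M : Matrix (Fin 2 × (Fin d₁ × Fin r₁)) (Fin 2 × (Fin d₁ × Fin r₁)) ℂ :=
    ((t : ℂ) • 1) + K with hM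
  have e00 : blockOf M (0 : Fin 2) (0 : Fin 2) = (t : ℂ) • (1 : Matrix _ _ ℂ) := by
    ext a b; simp [hM, hK, blockOf, Matrix.one_apply, Prod.ext_iff]
  have e11 : blockOf M (1 : Fin 2) (1 : Fin 2) = (t : ℂ) • (1 : Matrix _ _ ℂ) := by
    ext a b; simp [hM, hK, blockOf, Matrix.one_apply, Prod.ext_iff]
  have e01 : blockOf M (0 : Fin 2) (1 : Fin 2) = C := by
    ext a b; simp [hM, hK, blockOf, Matrix.one_apply, Prod.ext_iff]
  have e10 : blockOf M (1 : Fin 2) (0 : Fin 2) = Cᴴ := by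
    ext a b; simp [hM, hK, blockOf, Matrix.one_apply, Prod.ext_iff]
  have hblock : ∀ k l : Fin 2,
      (Matrix.of fun a b : Fin d₁ × Fin r₁ => M (k, a) (l, b)) ∈ Ssub d₁ r₁ := by
    intro k l
    show blockOf M k l ∈ Ssub d₁ r₁
    fin_cases k <;> fin_cases l
    · show blockOf M 0 0 ∈ Ssub d₁ r₁
      rw [e00]; exact Submodule.smul_mem _ _ Ssub_one
    · show blockOf M 0 1 ∈ Ssub d₁ r₁
      rw [e01]; exact hC
    · show blockOf M 1 0 ∈ Ssub d₁ r₁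
      rw [e10]; exact Ssub_star hC
    · show blockOf M 1 1 ∈ Ssub d₁ r₁
      rw [e11]; exact Submodule.smul_mem _ _ Ssub_one
  have hout := hCP 2 M hblock hpsd
  have hherm := hout.isHermitian
  have h1 : (Matrix.of fun a b : Fin d₁ × Fin r₁ => M ((1 : Fin 2), a) ((0 : Fin 2), b)) = Cᴴ := by
    ext a b
    simp [hM, hK, Matrix.one_apply, Prod.ext_iff]
  have h0 : (Matrix.of fun a b : Fin d₁ × Fin r₁ => M ((0 : Fin 2), a) ((1 : Fin 2), b)) = C := by
    ext a b
    simp [hM, hK, Matrix.one_apply, Prod.ext_iff]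
  ext p q
  have happly := hherm.apply ((1 : Fin 2), p) ((0 : Fin 2), q)
  simp only [Matrix.of_apply] at happly
  have e1 : Γ ⟨Matrix.of fun a b : Fin d₁ × Fin r₁ =>
      M ((1 : Fin 2), a) ((0 : Fin 2), b), hblock 1 0⟩ = Γ ⟨Cᴴ, Ssub_star hC⟩ :=
    congrArg Γ (Subtype.ext h1)
  have e0 : Γ ⟨Matrix.of fun a b : Fin d₁ × Fin r₁ =>
      M ((0 : Fin 2), a) ((1 : Fin 2), b), hblock 0 1⟩ = Γ ⟨C, hC⟩ :=
    congrArg Γ (Subtype.ext h0)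
  rw [Matrix.conjTranspose_apply]
  rw [e1, e0] at happly
  exact happly.symm

end GammaExt

section Functional

variable {d₁ r₁ d₂ r₂ : ℕ}

/-- The index equivalence `Fin (d*r) ≃ Fin d × Fin r`. -/
def eqQ (d r : ℕ) : Fin (d * r) ≃ Fin d × Fin r := finProdFinEquiv.symm

variable (Γ : ↥(Ssub d₁ r₁) →ₗ[ℂ] Matrix (Fin d₂ × Fin r₂) (Fin d₂ × Fin r₂) ℂ)

/-- The "Choi functional" associated to (the extension of) `Γ`. -/
def glin : Matrix (Fin (d₂ * r₂) × (Fin d₁ × Fin r₁)) (Fin (d₂ * r₂) × (Fin d₁ × Fin r₁)) ℂ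
    →ₗ[ℂ] ℂ where
  toFun Z := ∑ k : Fin (d₂ * r₂), ∑ l : Fin (d₂ * r₂),
    Gext Γ (blockOf Z k l) (eqQ d₂ r₂ k) (eqQ d₂ r₂ l)
  map_add' Z W := by
    simp [blockOf_add, Matrix.add_apply, Finset.sum_add_distrib]
  map_smul' c Z := by
    simp [blockOf_smul, Matrix.smul_apply, smul_eq_mul, Finset.mul_sum]

lemma glin_star (hCP : HypCP Γ)
    (Z : Matrix (Fin (d₂ * r₂) × (Fin d₁ × Fin r₁)) (Fin (d₂ * r₂) × (Fin d₁ × Fin r₁)) ℂ)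
    (hZ : ∀ k l, blockOf Z k l ∈ Ssub d₁ r₁) :
    glin Γ Zᴴ = starRingEnd ℂ (glin Γ Z) := by
  have hterm : ∀ k l : Fin (d₂ * r₂),
      Gext Γ (blockOf Zᴴ k l) (eqQ d₂ r₂ k) (eqQ d₂ r₂ l)
        = starRingEnd ℂ (Gext Γ (blockOf Z l k) (eqQ d₂ r₂ l) (eqQ d₂ r₂ k)) := by
    intro k l
    rw [blockOf_conjTranspose, Gext_apply Γ (Ssub_star (hZ l k)), Gamma_star Γ hCP (hZ l k),
      Matrix.conjTranspose_apply, Gext_apply Γ (hZ l k), starRingEnd_apply]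
  show (∑ k, ∑ l, Gext Γ (blockOf Zᴴ k l) (eqQ d₂ r₂ k) (eqQ d₂ r₂ l)) = _
  calc (∑ k, ∑ l, Gext Γ (blockOf Zᴴ k l) (eqQ d₂ r₂ k) (eqQ d₂ r₂ l))
      = ∑ k, ∑ l, starRingEnd ℂ
          (Gext Γ (blockOf Z l k) (eqQ d₂ r₂ l) (eqQ d₂ r₂ k)) := by
        simp only [hterm]
    _ = starRingEnd ℂ (∑ k, ∑ l, Gext Γ (blockOf Z l k) (eqQ d₂ r₂ l) (eqQ d₂ r₂ k)) := by
        simp [map_sum]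
    _ = starRingEnd ℂ (glin Γ Z) := by rw [Finset.sum_comm]; rfl

/-- The big block-matrix space. -/
abbrev BigMat (d₁ r₁ d₂ r₂ : ℕ) :=
  Matrix (Fin (d₂ * r₂) × (Fin d₁ × Fin r₁)) (Fin (d₂ * r₂) × (Fin d₁ × Fin r₁)) ℂ

/-- The Hermitian part of the operator system, inside the selfadjoint matrices. -/
def WH (d₁ r₁ d₂ r₂ : ℕ) : Submodule ℝ (selfAdjoint (BigMat d₁ r₁ d₂ r₂)) where
  carrier := {Z | ∀ k l, blockOf Z.val k l ∈ Ssub d₁ r₁}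
  add_mem' := by
    intro Z W hZ hW k l
    have : (Z + W).val = Z.val + W.val := rfl
    rw [this, blockOf_add]
    exact Submodule.add_mem _ (hZ k l) (hW k l)
  zero_mem' := by
    intro k l
    have : (0 : selfAdjoint (BigMat d₁ r₁ d₂ r₂)).val = 0 := rfl
    rw [this, blockOf_zero]
    exact Submodule.zero_mem _
  smul_mem' := by
    intro c Z hZ k l
    have : (c • Z).val = c • Z.val := rfl
    rw [this, blockOf_rsmul]
    exact Submodule.smul_mem _ _ (hZ k l)

/-- The positive semidefinite cone inside the selfadjoint matrices. -/
def psdCone (d₁ r₁ d₂ r₂ : ℕ) : ConvexCone ℝ (selfAdjoint (BigMat d₁ r₁ d₂ r₂)) where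
  carrier := {Z | Z.val.PosSemidef}
  smul_mem' := by
    intro c hc Z hZ
    show (c • Z).val.PosSemidef
    have h1 : (c • Z).val = c • Z.val := rfl
    have h2 : c • Z.val = (c : ℂ) • Z.val := by
      ext u v; simp [Complex.real_smul]
    rw [h1, h2]
    exact psd_rsmul hZ hc.le
  add_mem' := by
    intro Z hZ W hW
    show (Z + W).val.PosSemidef
    have : (Z + W).val = Z.val + W.val := rfl
    rw [this]
    exact hZ.add hW

/-- The partially-defined functional to be extended by Riesz extension. -/
def fPMap : (selfAdjoint (BigMat d₁ r₁ d₂ r₂)) →ₗ.[ℝ] ℝ where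
  domain := WH d₁ r₁ d₂ r₂
  toFun := {
    toFun := fun Z => (glin Γ Z.val.val).re
    map_add' := by
      intro Z W
      show (glin Γ (Z + W).val.val).re = (glin Γ Z.val.val).re + (glin Γ W.val.val).re
      have : (Z + W).val.val = Z.val.val + W.val.val := rfl
      rw [this, map_add]
      simp
    map_smul' := by
      intro c Z
      show (glin Γ (c • Z).val.val).re = (RingHom.id ℝ) c • (glin Γ Z.val.val).re
      have h1 : (c • Z).val.val = c • Z.val.val := rfl
      have h2 : c • Z.val.val = (c : ℂ) • Z.val.val := by
        ext u v; simp [Complex.real_smul]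
      rw [h1, h2, _root_.map_smul]
      simp }

end Functional

section RieszHyps

variable {d₁ r₁ d₂ r₂ : ℕ}
variable (Γ : ↥(Ssub d₁ r₁) →ₗ[ℂ] Matrix (Fin d₂ × Fin r₂) (Fin d₂ × Fin r₂) ℂ)

lemma glin_nonneg (hCP : HypCP Γ) (Z : BigMat d₁ r₁ d₂ r₂)
    (hZ : ∀ k l, blockOf Z k l ∈ Ssub d₁ r₁) (hpsd : Z.PosSemidef) :
    0 ≤ (glin Γ Z).re := by
  classical
  have hout := hCP (d₂ * r₂) Z hZ hpsd
  set X : Matrix (Fin (d₂ * r₂) × (Fin d₂ × Fin r₂)) (Fin (d₂ * r₂) × (Fin d₂ × Fin r₂)) ℂ :=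
    Matrix.of fun p q : Fin (d₂ * r₂) × (Fin d₂ × Fin r₂) =>
      Γ ⟨Matrix.of fun a b : Fin d₁ × Fin r₁ => Z (p.1, a) (q.1, b),
        hZ p.1 q.1⟩ p.2 q.2 with hXdef
  set x : Fin (d₂ * r₂) × (Fin d₂ × Fin r₂) → ℂ :=
    fun u => if eqQ d₂ r₂ u.1 = u.2 then 1 else 0 with hx
  have hsx : star x = x := by
    funext u
    rw [Pi.star_apply, hx]
    beta_reduce
    split_ifs <;> simp
  have h0 : 0 ≤ star x ⬝ᵥ (X *ᵥ x) := (Matrix.posSemidef_iff_dotProduct_mulVec.mp hout).2 x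
  have heq : star x ⬝ᵥ (X *ᵥ x) = glin Γ Z := by
    rw [hsx]
    have e1 : x ⬝ᵥ (X *ᵥ x) = ∑ u, ∑ v, x u * (X u v * x v) := by
      simp [dotProduct, Matrix.mulVec, Finset.mul_sum]
    rw [e1, Fintype.sum_prod_type]
    have e2 : ∀ k : Fin (d₂ * r₂), ∀ p : Fin d₂ × Fin r₂,
        (∑ v, x (k, p) * (X (k, p) v * x v))
          = if eqQ d₂ r₂ k = p then (∑ v, X (k, p) v * x v) else 0 := by
      intro k p
      rw [← Finset.mul_sum, hx]
      simp [boole_mul]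
    simp only [e2]
    have e3 : ∀ k : Fin (d₂ * r₂),
        (∑ p : Fin d₂ × Fin r₂, if eqQ d₂ r₂ k = p then (∑ v, X (k, p) v * x v) else 0)
          = ∑ v, X (k, eqQ d₂ r₂ k) v * x v := by
      intro k
      rw [Finset.sum_ite_eq]
      simp
    simp only [e3]
    have e4 : ∀ k : Fin (d₂ * r₂),
        (∑ v, X (k, eqQ d₂ r₂ k) v * x v)
          = ∑ l, X (k, eqQ d₂ r₂ k) (l, eqQ d₂ r₂ l) := by
      intro k
      rw [Fintype.sum_prod_type]
      refine Finset.sum_congr rfl fun l _ => ?_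
      have : ∀ q : Fin d₂ × Fin r₂,
          X (k, eqQ d₂ r₂ k) (l, q) * x (l, q)
            = if eqQ d₂ r₂ l = q then X (k, eqQ d₂ r₂ k) (l, q) else 0 := by
        intro q
        rw [hx]
        simp [mul_boole]
      simp only [this]
      rw [Finset.sum_ite_eq]
      simp
    simp only [e4]
    show _ = ∑ k, ∑ l, Gext Γ (blockOf Z k l) (eqQ d₂ r₂ k) (eqQ d₂ r₂ l)
    refine Finset.sum_congr rfl fun k _ => Finset.sum_congr rfl fun l _ => ?_
    rw [Gext_apply Γ (hZ k l)]
    rfl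
  rw [heq] at h0
  exact (Complex.nonneg_iff.mp h0).1

lemma fPMap_nonneg (hCP : HypCP Γ) :
    ∀ Z : (fPMap Γ).domain, (Z : selfAdjoint (BigMat d₁ r₁ d₂ r₂)) ∈ psdCone d₁ r₁ d₂ r₂ →
      0 ≤ fPMap Γ Z := by
  intro Z hpsd
  exact glin_nonneg Γ hCP Z.val.val Z.2 hpsd

lemma psd_dense :
    ∀ Y : selfAdjoint (BigMat d₁ r₁ d₂ r₂), ∃ Z : (fPMap Γ).domain,
      (Z : selfAdjoint (BigMat d₁ r₁ d₂ r₂)) + Y ∈ psdCone d₁ r₁ d₂ r₂ := by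
  intro Y
  have hY : (Y.val).IsHermitian := by
    rw [Matrix.IsHermitian, ← Matrix.star_eq_conjTranspose]
    exact Y.2
  obtain ⟨t, ht, hpsd⟩ := exists_smul_one_add_posSemidef hY
  have hsa : IsSelfAdjoint ((t : ℂ) • (1 : BigMat d₁ r₁ d₂ r₂)) := by
    rw [_root_.IsSelfAdjoint, star_smul, star_one, Complex.star_def, Complex.conj_ofReal]
  have hmem : (⟨(t : ℂ) • (1 : BigMat d₁ r₁ d₂ r₂), hsa⟩ :
      selfAdjoint (BigMat d₁ r₁ d₂ r₂)) ∈ WH d₁ r₁ d₂ r₂ := by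
    intro k l
    show blockOf ((t : ℂ) • (1 : BigMat d₁ r₁ d₂ r₂)) k l ∈ Ssub d₁ r₁
    rw [blockOf_smul, blockOf_one]
    by_cases h : k = l
    · rw [if_pos h]; exact Submodule.smul_mem _ _ Ssub_one
    · rw [if_neg h]; simp only [smul_zero]; exact Submodule.zero_mem (Ssub d₁ r₁)
  refine ⟨⟨_, hmem⟩, ?_⟩
  show ((⟨(t : ℂ) • 1, hsa⟩ : selfAdjoint (BigMat d₁ r₁ d₂ r₂)) + Y).val.PosSemidef
  exact hpsd

end RieszHyps

section Complexify

variable {d₁ r₁ d₂ r₂ : ℕ}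

/-- Hermitian (real) part. -/
def reSA (Z : BigMat d₁ r₁ d₂ r₂) : selfAdjoint (BigMat d₁ r₁ d₂ r₂) :=
  ⟨(2⁻¹ : ℂ) • (Z + Zᴴ), show star ((2⁻¹ : ℂ) • (Z + Zᴴ)) = (2⁻¹ : ℂ) • (Z + Zᴴ) by
    rw [star_smul, star_add, Matrix.star_eq_conjTranspose,
      Matrix.star_eq_conjTranspose, Matrix.conjTranspose_conjTranspose]
    have h2 : star (2⁻¹ : ℂ) = (2⁻¹ : ℂ) := by
      simp [Complex.star_def]
    rw [h2, add_comm]⟩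

/-- Anti-Hermitian (imaginary) part. -/
def imSA (Z : BigMat d₁ r₁ d₂ r₂) : selfAdjoint (BigMat d₁ r₁ d₂ r₂) :=
  ⟨(Complex.I / 2) • (Zᴴ - Z),
      show star ((Complex.I / 2) • (Zᴴ - Z)) = (Complex.I / 2) • (Zᴴ - Z) by
    rw [star_smul, star_sub, Matrix.star_eq_conjTranspose,
      Matrix.star_eq_conjTranspose, Matrix.conjTranspose_conjTranspose]
    have h2 : star (Complex.I / 2 : ℂ) = -(Complex.I / 2) := by
      simp [Complex.star_def, div_eq_mul_inv]
    rw [h2, neg_smul, ← smul_neg, neg_sub]⟩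

lemma reSA_val (Z : BigMat d₁ r₁ d₂ r₂) : (reSA Z).val = (2⁻¹ : ℂ) • (Z + Zᴴ) := rfl

lemma imSA_val (Z : BigMat d₁ r₁ d₂ r₂) : (imSA Z).val = (Complex.I / 2) • (Zᴴ - Z) := rfl

lemma reSA_add (Z W : BigMat d₁ r₁ d₂ r₂) : reSA (Z + W) = reSA Z + reSA W := by
  apply Subtype.ext
  show (2⁻¹ : ℂ) • (Z + W + (Z + W)ᴴ) = (2⁻¹ : ℂ) • (Z + Zᴴ) + (2⁻¹ : ℂ) • (W + Wᴴ)
  rw [Matrix.conjTranspose_add, ← smul_add]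
  congr 1
  abel

lemma imSA_add (Z W : BigMat d₁ r₁ d₂ r₂) : imSA (Z + W) = imSA Z + imSA W := by
  apply Subtype.ext
  show (Complex.I / 2) • ((Z + W)ᴴ - (Z + W))
      = (Complex.I / 2) • (Zᴴ - Z) + (Complex.I / 2) • (Wᴴ - W)
  rw [Matrix.conjTranspose_add, ← smul_add]
  congr 1
  abel

lemma reSA_rsmul (c : ℝ) (Z : BigMat d₁ r₁ d₂ r₂) : reSA ((c : ℂ) • Z) = c • reSA Z := by
  apply Subtype.ext
  show (2⁻¹ : ℂ) • ((c : ℂ) • Z + ((c : ℂ) • Z)ᴴ) = c • ((2⁻¹ : ℂ) • (Z + Zᴴ))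
  ext u v
  simp [Matrix.conjTranspose_apply, Complex.real_smul, Complex.conj_ofReal, mul_add]
  ring

lemma imSA_rsmul (c : ℝ) (Z : BigMat d₁ r₁ d₂ r₂) : imSA ((c : ℂ) • Z) = c • imSA Z := by
  apply Subtype.ext
  show (Complex.I / 2) • (((c : ℂ) • Z)ᴴ - (c : ℂ) • Z) = c • ((Complex.I / 2) • (Zᴴ - Z))
  ext u v
  simp [Matrix.conjTranspose_apply, Complex.real_smul, Complex.conj_ofReal, mul_sub]
  ring

lemma reSA_I_smul (Z : BigMat d₁ r₁ d₂ r₂) : reSA (Complex.I • Z) = -imSA Z := by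
  apply Subtype.ext
  show (2⁻¹ : ℂ) • (Complex.I • Z + (Complex.I • Z)ᴴ) = -((Complex.I / 2) • (Zᴴ - Z))
  have hsI : star Complex.I = -Complex.I := by simp [Complex.star_def]
  rw [Matrix.conjTranspose_smul, hsI]
  match_scalars <;> ring

lemma imSA_I_smul (Z : BigMat d₁ r₁ d₂ r₂) : imSA (Complex.I • Z) = reSA Z := by
  apply Subtype.ext
  show (Complex.I / 2) • ((Complex.I • Z)ᴴ - Complex.I • Z) = (2⁻¹ : ℂ) • (Z + Zᴴ)
  have hsI : star Complex.I = -Complex.I := by simp [Complex.star_def]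
  rw [Matrix.conjTranspose_smul, hsI]
  match_scalars <;> linear_combination (-(2:ℂ)⁻¹) * Complex.I_sq

lemma reSA_conjTranspose (Z : BigMat d₁ r₁ d₂ r₂) : reSA Zᴴ = reSA Z := by
  apply Subtype.ext
  show (2⁻¹ : ℂ) • (Zᴴ + Zᴴᴴ) = (2⁻¹ : ℂ) • (Z + Zᴴ)
  rw [Matrix.conjTranspose_conjTranspose, add_comm]

lemma imSA_conjTranspose (Z : BigMat d₁ r₁ d₂ r₂) : imSA Zᴴ = -imSA Z := by
  apply Subtype.ext
  show (Complex.I / 2) • (Zᴴᴴ - Zᴴ) = -((Complex.I / 2) • (Zᴴ - Z))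
  rw [Matrix.conjTranspose_conjTranspose, ← smul_neg, neg_sub]

lemma reSA_imSA_decomp (Z : BigMat d₁ r₁ d₂ r₂) :
    (reSA Z).val + Complex.I • (imSA Z).val = Z := by
  rw [reSA_val, imSA_val]
  match_scalars
  · linear_combination (-(2:ℂ)⁻¹) * Complex.I_sq
  · linear_combination ((2:ℂ)⁻¹) * Complex.I_sq

variable (G : selfAdjoint (BigMat d₁ r₁ d₂ r₂) →ₗ[ℝ] ℝ)

/-- Complexification of the real functional `G`. -/
def Ghat (Z : BigMat d₁ r₁ d₂ r₂) : ℂ := ((G (reSA Z) : ℝ) : ℂ) + Complex.I * (G (imSA Z) : ℝ)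

lemma Ghat_add (Z W : BigMat d₁ r₁ d₂ r₂) : Ghat G (Z + W) = Ghat G Z + Ghat G W := by
  unfold Ghat
  rw [reSA_add, imSA_add, map_add, map_add]
  push_cast
  ring

lemma Ghat_rsmul (c : ℝ) (Z : BigMat d₁ r₁ d₂ r₂) :
    Ghat G ((c : ℂ) • Z) = (c : ℂ) * Ghat G Z := by
  unfold Ghat
  rw [reSA_rsmul, imSA_rsmul, G.map_smul, G.map_smul, smul_eq_mul, smul_eq_mul]
  push_cast
  ring

lemma Ghat_I_smul (Z : BigMat d₁ r₁ d₂ r₂) :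
    Ghat G (Complex.I • Z) = Complex.I * Ghat G Z := by
  unfold Ghat
  rw [reSA_I_smul, imSA_I_smul, map_neg]
  push_cast
  linear_combination (-(G (imSA Z) : ℂ)) * Complex.I_sq

lemma Ghat_smul (c : ℂ) (Z : BigMat d₁ r₁ d₂ r₂) : Ghat G (c • Z) = c * Ghat G Z := by
  have hdecomp : c • Z = (c.re : ℂ) • Z + (c.im : ℂ) • (Complex.I • Z) := by
    rw [smul_smul, ← add_smul]
    congr 1
    exact (Complex.re_add_im c).symm
  rw [hdecomp, Ghat_add, Ghat_rsmul]
  have : Ghat G ((c.im : ℂ) • (Complex.I • Z)) = (c.im : ℂ) * (Complex.I * Ghat G Z) := by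
    rw [Ghat_rsmul, Ghat_I_smul]
  rw [this]
  have hc : (c.re : ℂ) + (c.im : ℂ) * Complex.I = c := Complex.re_add_im c
  linear_combination (Ghat G Z) * hc

/-- Complexification of `G` as a `ℂ`-linear map. -/
def GhatL : BigMat d₁ r₁ d₂ r₂ →ₗ[ℂ] ℂ where
  toFun := Ghat G
  map_add' := Ghat_add G
  map_smul' c Z := by simpa using Ghat_smul G c Z

lemma GhatL_conj (Z : BigMat d₁ r₁ d₂ r₂) :
    starRingEnd ℂ (GhatL G Z) = GhatL G Zᴴ := by
  show starRingEnd ℂ (Ghat G Z) = Ghat G Zᴴ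
  unfold Ghat
  rw [reSA_conjTranspose, imSA_conjTranspose, map_neg]
  rw [_root_.map_add (starRingEnd ℂ), _root_.map_mul (starRingEnd ℂ), Complex.conj_I,
    Complex.conj_ofReal, Complex.conj_ofReal]
  push_cast
  ring

lemma GhatL_psd (hG2 : ∀ T ∈ psdCone d₁ r₁ d₂ r₂, 0 ≤ G T)
    {Z : BigMat d₁ r₁ d₂ r₂} (hZ : Z.PosSemidef) : 0 ≤ GhatL G Z := by
  have hsa : _root_.IsSelfAdjoint Z := by
    rw [_root_.IsSelfAdjoint, Matrix.star_eq_conjTranspose]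
    exact hZ.1
  have hre : reSA Z = ⟨Z, hsa⟩ := by
    apply Subtype.ext
    show (2⁻¹ : ℂ) • (Z + Zᴴ) = Z
    rw [hZ.1.eq, ← two_smul ℂ Z, smul_smul]
    norm_num
  have him : imSA Z = 0 := by
    apply Subtype.ext
    show (Complex.I / 2) • (Zᴴ - Z) = 0
    rw [hZ.1.eq, sub_self, smul_zero]
  show 0 ≤ Ghat G Z
  unfold Ghat
  rw [hre, him, map_zero]
  simp only [Complex.ofReal_zero, mul_zero, add_zero]
  exact Complex.zero_le_real.mpr (hG2 ⟨Z, hsa⟩ hZ)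

end Complexify

section SmapDef

variable {d₁ r₁ d₂ r₂ : ℕ}
variable (Γ : ↥(Ssub d₁ r₁) →ₗ[ℂ] Matrix (Fin d₂ × Fin r₂) (Fin d₂ × Fin r₂) ℂ)
variable (G : selfAdjoint (BigMat d₁ r₁ d₂ r₂) →ₗ[ℝ] ℝ)

lemma GhatL_eq_glin (hCP : HypCP Γ)
    (hG1 : ∀ x : (fPMap Γ).domain, G x.val = fPMap Γ x)
    (Z : BigMat d₁ r₁ d₂ r₂) (hZ : ∀ k l, blockOf Z k l ∈ Ssub d₁ r₁) :
    GhatL G Z = glin Γ Z := by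
  have hreW : (reSA Z) ∈ WH d₁ r₁ d₂ r₂ := by
    intro k l
    rw [reSA_val, blockOf_smul, blockOf_add, blockOf_conjTranspose]
    exact Submodule.smul_mem _ _ (Submodule.add_mem _ (hZ k l) (Ssub_star (hZ l k)))
  have himW : (imSA Z) ∈ WH d₁ r₁ d₂ r₂ := by
    intro k l
    rw [imSA_val, blockOf_smul, blockOf_sub, blockOf_conjTranspose]
    exact Submodule.smul_mem _ _ (Submodule.sub_mem _ (Ssub_star (hZ l k)) (hZ k l))
  have hreal : ∀ (Y : selfAdjoint (BigMat d₁ r₁ d₂ r₂)),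
      (∀ k l, blockOf Y.val k l ∈ Ssub d₁ r₁) →
      ((glin Γ Y.val).re : ℂ) = glin Γ Y.val := by
    intro Y hY
    have h1 : glin Γ (Y.val)ᴴ = starRingEnd ℂ (glin Γ Y.val) := glin_star Γ hCP Y.val hY
    have h2 : (Y.val)ᴴ = Y.val := by
      rw [← Matrix.star_eq_conjTranspose]; exact Y.2
    rw [h2] at h1
    have him : (glin Γ Y.val).im = 0 := by
      have h3 := congrArg Complex.im h1
      simp only [Complex.conj_im] at h3
      linarith
    exact Complex.ext (by simp) (by simp [him])
  have hre : ((G (reSA Z) : ℝ) : ℂ) = glin Γ (reSA Z).val := by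
    have h3 : G (reSA Z) = (glin Γ (reSA Z).val).re := hG1 ⟨reSA Z, hreW⟩
    rw [h3]
    exact hreal (reSA Z) hreW
  have him : ((G (imSA Z) : ℝ) : ℂ) = glin Γ (imSA Z).val := by
    have h3 : G (imSA Z) = (glin Γ (imSA Z).val).re := hG1 ⟨imSA Z, himW⟩
    rw [h3]
    exact hreal (imSA Z) himW
  show Ghat G Z = glin Γ Z
  unfold Ghat
  rw [hre, him]
  calc glin Γ (reSA Z).val + Complex.I * glin Γ (imSA Z).val
      = glin Γ ((reSA Z).val + Complex.I • (imSA Z).val) := by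
        rw [map_add, _root_.map_smul, smul_eq_mul]
    _ = glin Γ Z := by rw [reSA_imSA_decomp]

/-- The elementary big matrix `C ⊗ E_{pq}` (suitably indexed). -/
def ZmE (C : Matrix (Fin d₁ × Fin r₁) (Fin d₁ × Fin r₁) ℂ) (p q : Fin d₂ × Fin r₂) :
    BigMat d₁ r₁ d₂ r₂ :=
  Matrix.of fun u v =>
    (if eqQ d₂ r₂ u.1 = p then 1 else 0) * ((if eqQ d₂ r₂ v.1 = q then 1 else 0) * C u.2 v.2)

lemma ZmE_add (C D : Matrix (Fin d₁ × Fin r₁) (Fin d₁ × Fin r₁) ℂ) (p q : Fin d₂ × Fin r₂) :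
    ZmE (C + D) p q = (ZmE C p q : BigMat d₁ r₁ d₂ r₂) + ZmE D p q := by
  ext u v; simp [ZmE, mul_add]

lemma ZmE_smul (c : ℂ) (C : Matrix (Fin d₁ × Fin r₁) (Fin d₁ × Fin r₁) ℂ) (p q : Fin d₂ × Fin r₂) :
    ZmE (c • C) p q = c • (ZmE C p q : BigMat d₁ r₁ d₂ r₂) := by
  ext u v; simp [ZmE]

lemma blockOf_ZmE (C : Matrix (Fin d₁ × Fin r₁) (Fin d₁ × Fin r₁) ℂ) (p q : Fin d₂ × Fin r₂)
    (k l : Fin (d₂ * r₂)) :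
    blockOf (ZmE C p q : BigMat d₁ r₁ d₂ r₂) k l
      = ((if eqQ d₂ r₂ k = p then (1:ℂ) else 0) * (if eqQ d₂ r₂ l = q then (1:ℂ) else 0)) • C := by
  ext a b; simp [ZmE, blockOf]

lemma ZmE_conjTranspose (C : Matrix (Fin d₁ × Fin r₁) (Fin d₁ × Fin r₁) ℂ)
    (p q : Fin d₂ × Fin r₂) :
    (ZmE C q p : BigMat d₁ r₁ d₂ r₂)ᴴ = ZmE Cᴴ p q := by
  ext u v
  show star (ZmE C q p v u) = ZmE Cᴴ p q u v
  simp only [ZmE, Matrix.of_apply, Matrix.conjTranspose_apply]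
  split_ifs <;> simp

/-- The extended superchannel. -/
def Smap : Matrix (Fin d₁ × Fin r₁) (Fin d₁ × Fin r₁) ℂ →ₗ[ℂ]
    Matrix (Fin d₂ × Fin r₂) (Fin d₂ × Fin r₂) ℂ where
  toFun C := Matrix.of fun p q => GhatL G (ZmE C p q)
  map_add' C D := by
    ext p q
    show GhatL G (ZmE (C + D) p q) = GhatL G (ZmE C p q) + GhatL G (ZmE D p q)
    rw [ZmE_add, map_add]
  map_smul' c C := by
    ext p q
    show GhatL G (ZmE (c • C) p q) = c * GhatL G (ZmE C p q)
    rw [ZmE_smul, _root_.map_smul, smul_eq_mul]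

lemma Smap_extends (hCP : HypCP Γ)
    (hG1 : ∀ x : (fPMap Γ).domain, G x.val = fPMap Γ x)
    {C : Matrix (Fin d₁ × Fin r₁) (Fin d₁ × Fin r₁) ℂ} (hC : C ∈ Ssub d₁ r₁) :
    Smap G C = Γ ⟨C, hC⟩ := by
  ext p q
  show GhatL G (ZmE C p q) = Γ ⟨C, hC⟩ p q
  rw [GhatL_eq_glin Γ G hCP hG1 _ (fun k l => by
    rw [blockOf_ZmE]; exact Submodule.smul_mem _ _ hC)]
  show (∑ k, ∑ l, Gext Γ (blockOf (ZmE C p q : BigMat d₁ r₁ d₂ r₂) k l)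
      (eqQ d₂ r₂ k) (eqQ d₂ r₂ l)) = _
  have hterm : ∀ k l : Fin (d₂ * r₂),
      Gext Γ (blockOf (ZmE C p q : BigMat d₁ r₁ d₂ r₂) k l) (eqQ d₂ r₂ k) (eqQ d₂ r₂ l)
        = (if eqQ d₂ r₂ k = p then (1:ℂ) else 0) *
            ((if eqQ d₂ r₂ l = q then (1:ℂ) else 0) * Γ ⟨C, hC⟩ (eqQ d₂ r₂ k) (eqQ d₂ r₂ l)) := by
    intro k l
    rw [blockOf_ZmE, _root_.map_smul, Matrix.smul_apply, Gext_apply Γ hC, smul_eq_mul]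
    ring
  simp only [hterm]
  have hswap : (∑ k, ∑ l,
      (if eqQ d₂ r₂ k = p then (1:ℂ) else 0) *
        ((if eqQ d₂ r₂ l = q then (1:ℂ) else 0) * Γ ⟨C, hC⟩ (eqQ d₂ r₂ k) (eqQ d₂ r₂ l)))
      = ∑ p' : Fin d₂ × Fin r₂, ∑ q' : Fin d₂ × Fin r₂,
        (if p' = p then (1:ℂ) else 0) * ((if q' = q then (1:ℂ) else 0) * Γ ⟨C, hC⟩ p' q') := by
    refine Fintype.sum_equiv (eqQ d₂ r₂) _ _ fun k => ?_
    exact Fintype.sum_equiv (eqQ d₂ r₂) _ _ fun l => rfl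
  rw [hswap]
  simp [boole_mul, Finset.sum_ite_eq']

end SmapDef

section SmapCP

lemma collapse_snd {β α : Type*} [Fintype β] [Fintype α] [DecidableEq α]
    (p₀ : α) (f : β × α → ℂ) :
    ∑ u : β × α, (if p₀ = u.2 then (1:ℂ) else 0) * f u = ∑ k : β, f (k, p₀) := by
  rw [Fintype.sum_prod_type]
  refine Finset.sum_congr rfl fun k _ => ?_
  simp [boole_mul, Finset.sum_ite_eq]

lemma collapse_snd' {β α : Type*} [Fintype β] [Fintype α] [DecidableEq α]
    (p₀ : α) (f : β × α → ℂ) :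
    ∑ u : β × α, (if u.2 = p₀ then (1:ℂ) else 0) * f u = ∑ k : β, f (k, p₀) := by
  rw [Fintype.sum_prod_type]
  refine Finset.sum_congr rfl fun k _ => ?_
  simp [boole_mul, Finset.sum_ite_eq']

variable {d₁ r₁ d₂ r₂ : ℕ}
variable (G : selfAdjoint (BigMat d₁ r₁ d₂ r₂) →ₗ[ℝ] ℝ)

lemma Smap_CP (hG2 : ∀ T ∈ psdCone d₁ r₁ d₂ r₂, 0 ≤ G T) :
    IsCP ⇑(Smap (d₁ := d₁) (r₁ := r₁) (d₂ := d₂) (r₂ := r₂) G) := by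
  intro n M hMpsd
  have hermM := hMpsd.isHermitian
  rw [Matrix.posSemidef_iff_dotProduct_mulVec]
  constructor
  · -- Hermitian part
    apply Matrix.IsHermitian.ext
    intro u v
    obtain ⟨k, p⟩ := u; obtain ⟨l, q⟩ := v
    have h1 : mapBlocks (⇑(Smap G)) M (l, q) (k, p)
        = GhatL G (ZmE (blockOf M l k) q p) := rfl
    have h2 : mapBlocks (⇑(Smap G)) M (k, p) (l, q)
        = GhatL G (ZmE (blockOf M k l) p q) := rfl
    rw [h1, h2, ← starRingEnd_apply, GhatL_conj, ZmE_conjTranspose]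
    have h3 : (blockOf M l k)ᴴ = blockOf M k l := by
      ext a b
      show star (blockOf M l k b a) = _
      exact hermM.apply (k, a) (l, b)
    rw [h3]
  · intro x
    set B : Matrix (Fin n × (Fin d₁ × Fin r₁)) (Fin (d₂ * r₂) × (Fin d₁ × Fin r₁)) ℂ :=
      Matrix.of fun w u => x (w.1, eqQ d₂ r₂ u.1) * (if w.2 = u.2 then 1 else 0) with hB
    have hBpsd : (Bᴴ * M * B).PosSemidef := hMpsd.conjTranspose_mul_mul_same B
    have e1 : star x ⬝ᵥ (mapBlocks (⇑(Smap G)) M *ᵥ x)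
        = ∑ u, ∑ v, star (x u) * (mapBlocks (⇑(Smap G)) M u v * x v) := by
      simp [dotProduct, Matrix.mulVec, Finset.mul_sum]
    have e2 : ∀ (u v : Fin n × (Fin d₂ × Fin r₂)),
        star (x u) * (mapBlocks (⇑(Smap G)) M u v * x v)
          = GhatL G ((star (x u) * x v) •
              (ZmE (blockOf M u.1 v.1) u.2 v.2 : BigMat d₁ r₁ d₂ r₂)) := by
      intro u v
      rw [_root_.map_smul, smul_eq_mul]
      have h4 : mapBlocks (⇑(Smap G)) M u v
          = GhatL G (ZmE (blockOf M u.1 v.1) u.2 v.2) := rfl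
      rw [h4]; ring
    rw [e1]
    simp only [e2, ← map_sum]
    have hmat : (∑ u : Fin n × (Fin d₂ × Fin r₂), ∑ v : Fin n × (Fin d₂ × Fin r₂),
        (star (x u) * x v) • (ZmE (blockOf M u.1 v.1) u.2 v.2 : BigMat d₁ r₁ d₂ r₂))
        = Bᴴ * M * B := by
      ext ⟨k', a⟩ ⟨l', b⟩
      simp only [Matrix.sum_apply, Matrix.smul_apply, smul_eq_mul]
      have hterm : ∀ (u v : Fin n × (Fin d₂ × Fin r₂)),
          star (x u) * x v *
            ((ZmE (blockOf M u.1 v.1) u.2 v.2 : BigMat d₁ r₁ d₂ r₂) (k', a) (l', b))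
            = (if eqQ d₂ r₂ k' = u.2 then (1:ℂ) else 0) *
                ((if eqQ d₂ r₂ l' = v.2 then (1:ℂ) else 0) *
                  (star (x u) * x v * M (u.1, a) (v.1, b))) := by
        intro u v
        have hent : (ZmE (blockOf M u.1 v.1) u.2 v.2 : BigMat d₁ r₁ d₂ r₂) (k', a) (l', b)
            = (if eqQ d₂ r₂ k' = u.2 then (1:ℂ) else 0) *
                ((if eqQ d₂ r₂ l' = v.2 then (1:ℂ) else 0) * M (u.1, a) (v.1, b)) := rfl
        rw [hent]
        ring
      calc (∑ u : Fin n × (Fin d₂ × Fin r₂), ∑ v : Fin n × (Fin d₂ × Fin r₂),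
            star (x u) * x v *
              ((ZmE (blockOf M u.1 v.1) u.2 v.2 : BigMat d₁ r₁ d₂ r₂) (k', a) (l', b)))
          = ∑ u : Fin n × (Fin d₂ × Fin r₂), (if eqQ d₂ r₂ k' = u.2 then (1:ℂ) else 0) *
              (∑ v : Fin n × (Fin d₂ × Fin r₂), (if eqQ d₂ r₂ l' = v.2 then (1:ℂ) else 0) *
                (star (x u) * x v * M (u.1, a) (v.1, b))) := by
            refine Finset.sum_congr rfl fun u _ => ?_
            rw [Finset.mul_sum]
            exact Finset.sum_congr rfl fun v _ => hterm u v
        _ = ∑ u : Fin n × (Fin d₂ × Fin r₂), (if eqQ d₂ r₂ k' = u.2 then (1:ℂ) else 0) *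
              (∑ l : Fin n, star (x u) * x (l, eqQ d₂ r₂ l') * M (u.1, a) (l, b)) := by
            refine Finset.sum_congr rfl fun u _ => ?_
            rw [collapse_snd (eqQ d₂ r₂ l')
              (fun v => star (x u) * x v * M (u.1, a) (v.1, b))]
        _ = ∑ k : Fin n, ∑ l : Fin n,
              star (x (k, eqQ d₂ r₂ k')) * x (l, eqQ d₂ r₂ l') * M (k, a) (l, b) := by
            rw [collapse_snd (eqQ d₂ r₂ k')
              (fun u => ∑ l : Fin n, star (x u) * x (l, eqQ d₂ r₂ l') * M (u.1, a) (l, b))]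
        _ = (Bᴴ * M * B) (k', a) (l', b) := by
            rw [Matrix.mul_apply]
            have hBMentry : ∀ v' : Fin n × (Fin d₁ × Fin r₁),
                (Bᴴ * M) (k', a) v'
                  = ∑ k : Fin n, star (x (k, eqQ d₂ r₂ k')) * M (k, a) v' := by
              intro v'
              rw [Matrix.mul_apply]
              have hstarB : ∀ u' : Fin n × (Fin d₁ × Fin r₁),
                  Bᴴ (k', a) u' * M u' v'
                    = (if u'.2 = a then (1:ℂ) else 0) *
                        (star (x (u'.1, eqQ d₂ r₂ k')) * M u' v') := by
                intro u'
                rw [Matrix.conjTranspose_apply]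
                show star (x (u'.1, eqQ d₂ r₂ k') * (if u'.2 = a then (1:ℂ) else 0)) * M u' v'
                    = _
                split_ifs with h <;> simp
              simp only [hstarB]
              rw [collapse_snd' a (fun u' => star (x (u'.1, eqQ d₂ r₂ k')) * M u' v')]
            have hfinal : ∀ v' : Fin n × (Fin d₁ × Fin r₁),
                (Bᴴ * M) (k', a) v' * B v' (l', b)
                  = (if v'.2 = b then (1:ℂ) else 0) *
                      (∑ k : Fin n, star (x (k, eqQ d₂ r₂ k')) * x (v'.1, eqQ d₂ r₂ l') *
                        M (k, a) v') := by
              intro v'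
              rw [hBMentry]
              have hBv : B v' (l', b)
                  = x (v'.1, eqQ d₂ r₂ l') * (if v'.2 = b then (1:ℂ) else 0) := rfl
              rw [hBv]
              split_ifs with h
              · rw [mul_one, one_mul, Finset.sum_mul]
                refine Finset.sum_congr rfl fun k _ => by ring
              · simp
            simp only [hfinal]
            rw [collapse_snd' b (fun v' => ∑ k : Fin n,
              star (x (k, eqQ d₂ r₂ k')) * x (v'.1, eqQ d₂ r₂ l') * M (k, a) v')]
            rw [Finset.sum_comm]
    rw [hmat]
    exact GhatL_psd G hG2 hBpsd

end SmapCP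

section HermHelpers

variable {m : Type*}

lemma herm_re_isHermitian (Z : Matrix m m ℂ) : ((2⁻¹ : ℂ) • (Z + Zᴴ)).IsHermitian := by
  show ((2⁻¹ : ℂ) • (Z + Zᴴ))ᴴ = _
  rw [Matrix.conjTranspose_smul, Matrix.conjTranspose_add, Matrix.conjTranspose_conjTranspose]
  have h2 : star (2⁻¹ : ℂ) = (2⁻¹ : ℂ) := by simp [Complex.star_def]
  rw [h2, add_comm]

lemma herm_im_isHermitian (Z : Matrix m m ℂ) :
    ((Complex.I / 2) • (Zᴴ - Z)).IsHermitian := by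
  show ((Complex.I / 2) • (Zᴴ - Z))ᴴ = _
  rw [Matrix.conjTranspose_smul, Matrix.conjTranspose_sub, Matrix.conjTranspose_conjTranspose]
  have h2 : star (Complex.I / 2 : ℂ) = -(Complex.I / 2) := by
    simp [Complex.star_def, div_eq_mul_inv]
  rw [h2, neg_smul, ← smul_neg, neg_sub]

lemma herm_decomp (Z : Matrix m m ℂ) :
    (2⁻¹ : ℂ) • (Z + Zᴴ) + Complex.I • ((Complex.I / 2) • (Zᴴ - Z)) = Z := by
  match_scalars
  · linear_combination (-(2:ℂ)⁻¹) * Complex.I_sq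
  · linear_combination ((2:ℂ)⁻¹) * Complex.I_sq

end HermHelpers

/-- every QSC extends to a quantum superchannel. A completely positive,
CPTP-preserving linear map `Γ̃ : S(d₁,r₁) → M_{d₂}(M_{r₂})` admits a completely positive
extension `S̃` to all of `M_{d₁}(M_{r₁})` which is moreover TP-preserving. -/
theorem QSC_extends_to_superchannel (d₁ r₁ d₂ r₂ : ℕ)
    (hd₁ : 0 < d₁) (hr₁ : 0 < r₁) (hd₂ : 0 < d₂) (hr₂ : 0 < r₂)
    (Γ : ↥(Ssub d₁ r₁) →ₗ[ℂ] Matrix (Fin d₂ × Fin r₂) (Fin d₂ × Fin r₂) ℂ)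
    (hCP : ∀ (n : ℕ) (M : Matrix (Fin n × (Fin d₁ × Fin r₁)) (Fin n × (Fin d₁ × Fin r₁)) ℂ)
        (hM : ∀ k l : Fin n,
          (Matrix.of fun a b : Fin d₁ × Fin r₁ => M (k, a) (l, b)) ∈ Ssub d₁ r₁),
      M.PosSemidef →
      (Matrix.of fun p q : Fin n × (Fin d₂ × Fin r₂) =>
        Γ ⟨Matrix.of fun a b : Fin d₁ × Fin r₁ => M (p.1, a) (q.1, b),
          hM p.1 q.1⟩ p.2 q.2).PosSemidef)
    (hTP : ∀ C : ↥(Ssub d₁ r₁),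
      (C : Matrix (Fin d₁ × Fin r₁) (Fin d₁ × Fin r₁) ℂ).PosSemidef →
      ptrace (C : Matrix (Fin d₁ × Fin r₁) (Fin d₁ × Fin r₁) ℂ) = 1 →
      (Γ C).PosSemidef ∧ ptrace (Γ C) = 1) :
    ∃ S : Matrix (Fin d₁ × Fin r₁) (Fin d₁ × Fin r₁) ℂ →ₗ[ℂ]
        Matrix (Fin d₂ × Fin r₂) (Fin d₂ × Fin r₂) ℂ,
      IsCP ⇑S ∧
      (∀ C : ↥(Ssub d₁ r₁), S (C : Matrix (Fin d₁ × Fin r₁) (Fin d₁ × Fin r₁) ℂ) = Γ C) ∧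
      ∀ C : Matrix (Fin d₁ × Fin r₁) (Fin d₁ × Fin r₁) ℂ,
        ptrace C = 1 → ptrace (S C) = 1 := by
  classical
  have hCP' : HypCP Γ := hCP
  obtain ⟨G, hG1, hG2⟩ := riesz_extension ((psdCone d₁ r₁ d₂ r₂).toPointedCone Matrix.PosSemidef.zero) (fPMap Γ)
    (fPMap_nonneg Γ hCP') (psd_dense Γ)
  have hG1' : ∀ x : (fPMap Γ).domain, G x.val = fPMap Γ x := hG1
  -- the basic CPTP Choi matrix `C₀`
  set C₀ : Matrix (Fin d₁ × Fin r₁) (Fin d₁ × Fin r₁) ℂ := ((r₁ : ℂ))⁻¹ • 1 with hC₀def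
  have hr1 : (r₁ : ℂ) ≠ 0 := Nat.cast_ne_zero.mpr hr₁.ne'
  have hC₀mem : C₀ ∈ Ssub d₁ r₁ := Submodule.smul_mem _ _ Ssub_one
  have hC₀psd : C₀.PosSemidef := by
    have hco : (((r₁ : ℝ)⁻¹ : ℝ) : ℂ) = ((r₁ : ℂ))⁻¹ := by push_cast; ring
    rw [hC₀def, ← hco]
    exact psd_rsmul Matrix.PosSemidef.one (by positivity)
  have hC₀tr : ptrace C₀ = 1 := by
    ext i j
    show btr C₀ i j = (1 : Matrix (Fin d₁) (Fin d₁) ℂ) i j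
    rw [hC₀def, btr_smul, btr_one]
    by_cases h : i = j
    · rw [if_pos h, h, Matrix.one_apply_eq]
      exact inv_mul_cancel₀ hr1
    · rw [if_neg h, mul_zero, Matrix.one_apply_ne h]
  have h₀ := (hTP ⟨C₀, hC₀mem⟩ hC₀psd hC₀tr).2
  -- key: Γ kills Hermitian, partial-trace-zero elements of S
  have hkey : ∀ (H : Matrix (Fin d₁ × Fin r₁) (Fin d₁ × Fin r₁) ℂ) (hH : H ∈ Ssub d₁ r₁),
      H.IsHermitian → ptrace H = 0 → ptrace (Γ ⟨H, hH⟩) = 0 := by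
    intro H hH hherm htr0
    obtain ⟨t, ht, hpsd⟩ := exists_smul_one_add_posSemidef hherm
    set ε : ℝ := ((r₁ : ℝ) * t)⁻¹ with hεdef
    have hr1R : (0:ℝ) < (r₁ : ℝ) := by exact_mod_cast hr₁
    have hεpos : 0 < ε := by positivity
    have hC' : C₀ + ((ε : ℝ) : ℂ) • H = ((ε : ℝ) : ℂ) • (((t : ℝ) : ℂ) • 1 + H) := by
      rw [smul_add, smul_smul, hC₀def]
      congr 2
      rw [hεdef]
      push_cast
      field_simp
    have hC'psd : (C₀ + ((ε : ℝ) : ℂ) • H).PosSemidef := by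
      rw [hC']
      exact psd_rsmul hpsd hεpos.le
    have hC'mem : C₀ + ((ε : ℝ) : ℂ) • H ∈ Ssub d₁ r₁ :=
      Submodule.add_mem _ hC₀mem (Submodule.smul_mem _ _ hH)
    have hC'tr : ptrace (C₀ + ((ε : ℝ) : ℂ) • H) = 1 := by
      rw [ptrace_add, hC₀tr, ptrace_smul, htr0, smul_zero, add_zero]
    have h₁ := (hTP ⟨_, hC'mem⟩ hC'psd hC'tr).2
    have hsplit : (⟨C₀ + ((ε : ℝ) : ℂ) • H, hC'mem⟩ : Ssub d₁ r₁)
        = ⟨C₀, hC₀mem⟩ + ((ε : ℝ) : ℂ) • ⟨H, hH⟩ := by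
      apply Subtype.ext; rfl
    rw [hsplit, map_add, LinearMap.map_smul] at h₁
    rw [ptrace_add, ptrace_smul, h₀] at h₁
    have h2 : ((ε : ℝ) : ℂ) • ptrace (Γ ⟨H, hH⟩) = 0 := by
      rw [add_comm] at h₁
      exact add_eq_right.mp h₁
    have hεC : ((ε : ℝ) : ℂ) ≠ 0 := by
      simp only [ne_eq, Complex.ofReal_eq_zero]
      exact hεpos.ne'
    rcases smul_eq_zero.mp h2 with h | h
    · exact absurd h hεC
    · exact h
  refine ⟨Smap G, Smap_CP G hG2, ?_, ?_⟩
  · intro C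
    have h := Smap_extends Γ G hCP' hG1' C.2
    have hCeta : (⟨(C : Matrix (Fin d₁ × Fin r₁) (Fin d₁ × Fin r₁) ℂ), C.2⟩ :
        Ssub d₁ r₁) = C := rfl
    rw [h, hCeta]
  · intro C hCtr
    have hbtr : ∀ i j, btr C i j = if i = j then 1 else 0 := by
      intro i j
      have h := congrFun (congrFun hCtr i) j
      by_cases hij : i = j
      · subst hij
        rw [if_pos rfl]
        simpa [ptrace, Matrix.one_apply] using h
      · rw [if_neg hij]
        simpa [ptrace, Matrix.one_apply, hij] using h
    have hCmem : C ∈ Ssub d₁ r₁ := by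
      constructor
      · intro i j; rw [hbtr, hbtr]; simp
      · intro i j hij; rw [hbtr, if_neg hij]
    rw [Smap_extends Γ G hCP' hG1' hCmem]
    -- TP on the operator system
    set D : Matrix (Fin d₁ × Fin r₁) (Fin d₁ × Fin r₁) ℂ := C - C₀ with hDdef
    have hDmem : D ∈ Ssub d₁ r₁ := Submodule.sub_mem _ hCmem hC₀mem
    have hDtr : ptrace D = 0 := by rw [hDdef, ptrace_sub, hCtr, hC₀tr, sub_self]
    set H : Matrix (Fin d₁ × Fin r₁) (Fin d₁ × Fin r₁) ℂ := (2⁻¹ : ℂ) • (D + Dᴴ) with hHdef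
    set K : Matrix (Fin d₁ × Fin r₁) (Fin d₁ × Fin r₁) ℂ :=
      (Complex.I / 2) • (Dᴴ - D) with hKdef
    have hHmem : H ∈ Ssub d₁ r₁ :=
      Submodule.smul_mem _ _ (Submodule.add_mem _ hDmem (Ssub_star hDmem))
    have hKmem : K ∈ Ssub d₁ r₁ :=
      Submodule.smul_mem _ _ (Submodule.sub_mem _ (Ssub_star hDmem) hDmem)
    have hHtr : ptrace H = 0 := by
      rw [hHdef, ptrace_smul, ptrace_add, hDtr, ptrace_conjTranspose_eq_zero hDtr, add_zero,
        smul_zero]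
    have hKtr : ptrace K = 0 := by
      rw [hKdef, ptrace_smul, ptrace_sub, ptrace_conjTranspose_eq_zero hDtr, hDtr]
      simp
    have hHΓ := hkey H hHmem (herm_re_isHermitian D) hHtr
    have hKΓ := hkey K hKmem (herm_im_isHermitian D) hKtr
    have hCsplit : (⟨C, hCmem⟩ : Ssub d₁ r₁)
        = ⟨C₀, hC₀mem⟩ + ⟨H, hHmem⟩ + Complex.I • ⟨K, hKmem⟩ := by
      apply Subtype.ext
      show C = C₀ + H + Complex.I • K
      have hdec : H + Complex.I • K = D := by
        rw [hHdef, hKdef]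
        exact herm_decomp D
      rw [add_assoc, hdec, hDdef]
      abel
    rw [hCsplit, map_add, map_add, LinearMap.map_smul, ptrace_add, ptrace_add, ptrace_smul,
      h₀, hHΓ, hKΓ]
    simp

end
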